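/- Let z₁, z₂, τ ∈ ℂ satisfy τ² = z₁² + z₂², and define u : ℝ³ → ℂ (with coordinates (t,x,y)) as the sum of the sixteen exponentials exp(σ₁·z₁ x + σ₂·z₂ y + σ₃·τ t) and exp(σ₁·z₂ x + σ₂·z₁ y + σ₃·τ t) over all sign choices σ₁, σ₂, σ₃ ∈ {+1,−1}. Then: (1) u satisfies the 2D wave equation ∂²u/∂t² = ∂²u/∂x² + ∂²u/∂y² at every point of ℝ³; (2) (∂u/∂x)(t,0,y) = 0 for all t,y ∈ ℝ; and (3) ((∂u/∂x) − (∂u/∂y))(t,x,x) = 0 for all t,x ∈ ℝ, i.e. the normal derivative of u vanishes along the diagonal line {y = x}. -/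
import Mathlib


/-- Partial derivative in the first variable `t`. -/
noncomputable def d1 (u : ℝ × ℝ × ℝ → ℂ) : ℝ × ℝ × ℝ → ℂ :=
  fun p => deriv (fun s => u (s, p.2.1, p.2.2)) p.1

/-- Partial derivative in the second variable `x`. -/
noncomputable def d2 (u : ℝ × ℝ × ℝ → ℂ) : ℝ × ℝ × ℝ → ℂ :=
  fun p => deriv (fun s => u (p.1, s, p.2.2)) p.2.1

/-- Partial derivative in the third variable `y`. -/
noncomputable def d3 (u : ℝ × ℝ × ℝ → ℂ) : ℝ × ℝ × ℝ → ℂ :=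
  fun p => deriv (fun s => u (p.1, p.2.1, s)) p.2.2

/-- B-EPGP basis element for the 2D wave equation on the 45° wedge with Neumann boundary
conditions: the sum of the sixteen exponentials
`exp(σ₁ z₁ x + σ₂ z₂ y + σ₃ τ t)` and `exp(σ₁ z₂ x + σ₂ z₁ y + σ₃ τ t)` over all sign
choices `σ₁, σ₂, σ₃ ∈ {1,−1}`. -/
noncomputable def smallWedgeBasis (z₁ z₂ τ : ℂ) : ℝ × ℝ × ℝ → ℂ :=
  fun p => ∑ σ₁ ∈ ({1, -1} : Finset ℂ), ∑ σ₂ ∈ ({1, -1} : Finset ℂ),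
    ∑ σ₃ ∈ ({1, -1} : Finset ℂ),
      (Complex.exp (σ₁ * z₁ * (p.2.1 : ℂ) + σ₂ * z₂ * (p.2.2 : ℂ) + σ₃ * τ * (p.1 : ℂ)) +
        Complex.exp (σ₁ * z₂ * (p.2.1 : ℂ) + σ₂ * z₁ * (p.2.2 : ℂ) + σ₃ * τ * (p.1 : ℂ)))


open Complex in
private lemma hcosh' (A : ℂ) (x : ℝ) :
    HasDerivAt (fun s : ℝ => Complex.cosh (A * s)) (A * Complex.sinh (A * x)) x := by
  have h : HasDerivAt (fun z : ℂ => Complex.cosh (A * z)) (Complex.sinh (A * x) * (A * 1)) (x:ℂ) :=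
    ((hasDerivAt_id (x:ℂ)).const_mul A).ccosh
  simpa [mul_comm] using h.comp_ofReal

open Complex in
private lemma hsinh' (A : ℂ) (x : ℝ) :
    HasDerivAt (fun s : ℝ => Complex.sinh (A * s)) (A * Complex.cosh (A * x)) x := by
  have h : HasDerivAt (fun z : ℂ => Complex.sinh (A * z)) (Complex.cosh (A * x) * (A * 1)) (x:ℂ) :=
    ((hasDerivAt_id (x:ℂ)).const_mul A).csinh
  simpa [mul_comm] using h.comp_ofReal

open Complex in
private lemma swb_eq (z₁ z₂ τ : ℂ) : smallWedgeBasis z₁ z₂ τ = fun p : ℝ × ℝ × ℝ =>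
    8 * (Complex.cosh (z₁ * p.2.1) * Complex.cosh (z₂ * p.2.2)
        + Complex.cosh (z₂ * p.2.1) * Complex.cosh (z₁ * p.2.2)) * Complex.cosh (τ * p.1) := by
  funext p
  simp only [smallWedgeBasis, Finset.sum_pair (show (1:ℂ) ≠ -1 by norm_num),
    Complex.cosh, neg_mul, one_mul, Complex.exp_add]
  ring

theorem smallWedgeBasis_solves_wave_neumann
    (z₁ z₂ τ : ℂ) (h : τ ^ 2 = z₁ ^ 2 + z₂ ^ 2) :
    (∀ p : ℝ × ℝ × ℝ,
      d1 (d1 (smallWedgeBasis z₁ z₂ τ)) p =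
        d2 (d2 (smallWedgeBasis z₁ z₂ τ)) p + d3 (d3 (smallWedgeBasis z₁ z₂ τ)) p) ∧
    (∀ t y : ℝ, d2 (smallWedgeBasis z₁ z₂ τ) (t, 0, y) = 0) ∧
    (∀ t x : ℝ,
      d2 (smallWedgeBasis z₁ z₂ τ) (t, x, x) - d3 (smallWedgeBasis z₁ z₂ τ) (t, x, x) = 0) := by
  rw [swb_eq]
  set c := Complex.cosh
  set s := Complex.sinh
  have L1 : d1 (fun p : ℝ × ℝ × ℝ =>
      8 * (c (z₁ * p.2.1) * c (z₂ * p.2.2) + c (z₂ * p.2.1) * c (z₁ * p.2.2)) * c (τ * p.1))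
      = fun p => 8 * (c (z₁ * p.2.1) * c (z₂ * p.2.2) + c (z₂ * p.2.1) * c (z₁ * p.2.2))
          * (τ * s (τ * p.1)) := by
    funext p
    exact ((hcosh' τ p.1).const_mul
      (8 * (c (z₁ * p.2.1) * c (z₂ * p.2.2) + c (z₂ * p.2.1) * c (z₁ * p.2.2)))).deriv
  have L2 : d1 (fun p : ℝ × ℝ × ℝ =>
      8 * (c (z₁ * p.2.1) * c (z₂ * p.2.2) + c (z₂ * p.2.1) * c (z₁ * p.2.2)) * (τ * s (τ * p.1)))
      = fun p => 8 * (c (z₁ * p.2.1) * c (z₂ * p.2.2) + c (z₂ * p.2.1) * c (z₁ * p.2.2))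
          * (τ * (τ * c (τ * p.1))) := by
    funext p
    exact (((hsinh' τ p.1).const_mul τ).const_mul
      (8 * (c (z₁ * p.2.1) * c (z₂ * p.2.2) + c (z₂ * p.2.1) * c (z₁ * p.2.2)))).deriv
  have L3 : d2 (fun p : ℝ × ℝ × ℝ =>
      8 * (c (z₁ * p.2.1) * c (z₂ * p.2.2) + c (z₂ * p.2.1) * c (z₁ * p.2.2)) * c (τ * p.1))
      = fun p => 8 * (z₁ * s (z₁ * p.2.1) * c (z₂ * p.2.2) + z₂ * s (z₂ * p.2.1) * c (z₁ * p.2.2))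
          * c (τ * p.1) := by
    funext p
    exact (((((hcosh' z₁ p.2.1).mul_const (c (z₂ * p.2.2))).add
      ((hcosh' z₂ p.2.1).mul_const (c (z₁ * p.2.2)))).const_mul 8).mul_const (c (τ * p.1))).deriv
  have L4 : d2 (fun p : ℝ × ℝ × ℝ =>
      8 * (z₁ * s (z₁ * p.2.1) * c (z₂ * p.2.2) + z₂ * s (z₂ * p.2.1) * c (z₁ * p.2.2))
        * c (τ * p.1))
      = fun p => 8 * (z₁ * (z₁ * c (z₁ * p.2.1)) * c (z₂ * p.2.2)
          + z₂ * (z₂ * c (z₂ * p.2.1)) * c (z₁ * p.2.2)) * c (τ * p.1) := by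
    funext p
    exact ((((((hsinh' z₁ p.2.1).const_mul z₁).mul_const (c (z₂ * p.2.2))).add
      (((hsinh' z₂ p.2.1).const_mul z₂).mul_const (c (z₁ * p.2.2)))).const_mul 8).mul_const
        (c (τ * p.1))).deriv
  have L5 : d3 (fun p : ℝ × ℝ × ℝ =>
      8 * (c (z₁ * p.2.1) * c (z₂ * p.2.2) + c (z₂ * p.2.1) * c (z₁ * p.2.2)) * c (τ * p.1))
      = fun p => 8 * (c (z₁ * p.2.1) * (z₂ * s (z₂ * p.2.2)) + c (z₂ * p.2.1) * (z₁ * s (z₁ * p.2.2)))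
          * c (τ * p.1) := by
    funext p
    exact (((((hcosh' z₂ p.2.2).const_mul (c (z₁ * p.2.1))).add
      ((hcosh' z₁ p.2.2).const_mul (c (z₂ * p.2.1)))).const_mul 8).mul_const (c (τ * p.1))).deriv
  have L6 : d3 (fun p : ℝ × ℝ × ℝ =>
      8 * (c (z₁ * p.2.1) * (z₂ * s (z₂ * p.2.2)) + c (z₂ * p.2.1) * (z₁ * s (z₁ * p.2.2)))
        * c (τ * p.1))
      = fun p => 8 * (c (z₁ * p.2.1) * (z₂ * (z₂ * c (z₂ * p.2.2)))
          + c (z₂ * p.2.1) * (z₁ * (z₁ * c (z₁ * p.2.2)))) * c (τ * p.1) := by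
    funext p
    exact ((((((hsinh' z₂ p.2.2).const_mul z₂).const_mul (c (z₁ * p.2.1))).add
      (((hsinh' z₁ p.2.2).const_mul z₁).const_mul (c (z₂ * p.2.1)))).const_mul 8).mul_const
        (c (τ * p.1))).deriv
  refine ⟨fun p => ?_, fun t y => ?_, fun t x => ?_⟩
  · rw [L1, L2, L3, L4, L5, L6]
    linear_combination (8 * (c (z₁ * p.2.1) * c (z₂ * p.2.2) + c (z₂ * p.2.1) * c (z₁ * p.2.2))
      * c (τ * p.1)) * h
  · rw [L3]
    simp [s, Complex.sinh_zero]
  · rw [L3, L5]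
    ring
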